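/- Let μ be a Borel probability measure on ℝⁿ with 0 in the interior of the convex hull of supp(μ). Then there exist constants c₁, c₂ > 0 such that for every unit vector θ ∈ S^{n−1}, ∫_{ℝⁿ} ⟨x, θ⟩ · 1_{⟨x,θ⟩ > c₁} dμ(x) ≥ c₂. -/

import Mathlib

open MeasureTheory Filter
open scoped ENNReal RealInnerProductSpace

noncomputable section

abbrev En (n : ℕ) := EuclideanSpace ℝ (Fin n)

/-- Legendre transform of an `EReal`-valued function: `ψ*(y) = sup_{x ∈ dom ψ} (⟨x,y⟩ - ψ x)`. -/
def legendre {n : ℕ} (ψ : En n → EReal) (y : En n) : EReal :=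
  ⨆ x : {x : En n // ψ x < ⊤}, ((⟪x.1, y⟫ : ℝ) : EReal) - ψ x.1

/-- Convexity for `ℝ ∪ {+∞}`-valued functions. -/
def EConvexOn {n : ℕ} (ψ : En n → EReal) : Prop :=
  ∀ x y : En n, ∀ a b : ℝ, 0 ≤ a → 0 ≤ b → a + b = 1 →
    ψ (a • x + b • y) ≤ (a : EReal) * ψ x + (b : EReal) * ψ y

/-- `t ^ (-s)` with the conventions `0^(-s) = ∞`, `∞^(-s) = 0` (for `s > 0`). -/
def negPow (t : EReal) (s : ℝ) : ℝ≥0∞ :=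
  if t = ⊤ then 0 else if t ≤ 0 then ⊤ else ENNReal.ofReal (t.toReal ^ (-s))

/-- `I_p(ψ) = (∫ (ψ*)^{-(n+p)})^{-1/p} ∈ [0,∞]`. -/
def Ip (n : ℕ) (p : ℝ) (ψ : En n → EReal) : ℝ≥0∞ :=
  (∫⁻ x, negPow (legendre ψ x) ((n : ℝ) + p)) ^ (-(1 : ℝ) / p)

/-- The support of a Borel measure: points all of whose open neighborhoods have positive
measure. -/
def msupport {n : ℕ} (μ : Measure (En n)) : Set (En n) :=
  {x | ∀ U : Set (En n), IsOpen U → x ∈ U → 0 < μ U}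

lemma aux_int_inner {n : ℕ} (μ : Measure (En n))
    (hmom : Integrable (fun x : En n => ‖x‖) μ) (θ : En n) :
    Integrable (fun x : En n => ⟪x, θ⟫) μ := by
  refine (hmom.const_mul ‖θ‖).mono'
    (Continuous.inner continuous_id continuous_const).aestronglyMeasurable ?_
  filter_upwards with x
  simpa [abs_mul, mul_comm] using abs_real_inner_le_norm x θ

/-- the auxiliary function -/
noncomputable def gfun {n : ℕ} (μ : Measure (En n)) (t : ℝ) (θ : En n) : ℝ :=
  ∫ x, max (⟪x, θ⟫ - t) 0 ∂μ

lemma aux_int_g {n : ℕ} (μ : Measure (En n)) [IsProbabilityMeasure μ]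
    (hmom : Integrable (fun x : En n => ‖x‖) μ) (t : ℝ) (θ : En n) :
    Integrable (fun x : En n => max (⟪x, θ⟫ - t) 0) μ :=
  ((aux_int_inner μ hmom θ).sub (integrable_const t)).pos_part

lemma aux_g_cont {n : ℕ} (μ : Measure (En n)) [IsProbabilityMeasure μ]
    (hmom : Integrable (fun x : En n => ‖x‖) μ) (t : ℝ) : Continuous (gfun μ t) := by
  refine (LipschitzWith.of_dist_le_mul (K := (∫ x, ‖x‖ ∂μ).toNNReal)
    (f := gfun μ t) ?_).continuous
  intro θ θ'
  rw [Real.dist_eq, dist_eq_norm]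
  have h1 : (∫ x, max (⟪x, θ⟫ - t) 0 ∂μ) - (∫ x, max (⟪x, θ'⟫ - t) 0 ∂μ)
      = ∫ x, (max (⟪x, θ⟫ - t) 0 - max (⟪x, θ'⟫ - t) 0) ∂μ :=
    (integral_sub (aux_int_g μ hmom t θ) (aux_int_g μ hmom t θ')).symm
  show |(∫ x, max (⟪x, θ⟫ - t) 0 ∂μ) - (∫ x, max (⟪x, θ'⟫ - t) 0 ∂μ)| ≤ _
  rw [h1]
  calc |∫ x, (max (⟪x, θ⟫ - t) 0 - max (⟪x, θ'⟫ - t) 0) ∂μ|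
      ≤ ∫ x, |max (⟪x, θ⟫ - t) 0 - max (⟪x, θ'⟫ - t) 0| ∂μ := by
        simpa [Real.norm_eq_abs] using
          norm_integral_le_integral_norm (fun x => max (⟪x, θ⟫ - t) 0 - max (⟪x, θ'⟫ - t) 0) (μ := μ)
    _ ≤ ∫ x, ‖x‖ * ‖θ - θ'‖ ∂μ := by
        refine integral_mono ((aux_int_g μ hmom t θ).sub (aux_int_g μ hmom t θ')).abs
          (hmom.mul_const _) fun x => ?_
        calc |max (⟪x, θ⟫ - t) 0 - max (⟪x, θ'⟫ - t) 0|
            ≤ |(⟪x, θ⟫ - t) - (⟪x, θ'⟫ - t)| := abs_max_sub_max_le_abs _ _ _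
          _ = |⟪x, θ - θ'⟫| := by rw [sub_sub_sub_cancel_right, ← inner_sub_right]
          _ ≤ ‖x‖ * ‖θ - θ'‖ := abs_real_inner_le_norm _ _
    _ = (∫ x, ‖x‖ ∂μ) * ‖θ - θ'‖ := integral_mul_const _ _
    _ ≤ ((∫ x, ‖x‖ ∂μ).toNNReal : ℝ) * ‖θ - θ'‖ := by
        gcongr; exact (Real.le_coe_toNNReal _)

lemma aux_g_anti {n : ℕ} (μ : Measure (En n)) [IsProbabilityMeasure μ]
    (hmom : Integrable (fun x : En n => ‖x‖) μ) (t s : ℝ) (hts : t ≤ s) (θ : En n) :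
    gfun μ s θ ≤ gfun μ t θ := by
  refine integral_mono (aux_int_g μ hmom s θ) (aux_int_g μ hmom t θ) fun x => ?_
  exact max_le_max (by linarith) le_rfl

lemma aux_exists_pos {n : ℕ} (μ : Measure (En n))
    (h0 : (0 : En n) ∈ interior (convexHull ℝ (msupport μ)))
    (θ : En n) (hθ : ‖θ‖ = 1) : ∃ x₀ ∈ msupport μ, 0 < ⟪x₀, θ⟫ := by
  by_contra hc
  push_neg at hc
  have hlin : IsLinearMap ℝ (fun x : En n => ⟪x, θ⟫) :=
    ⟨fun a b => inner_add_left a b θ, fun c a => real_inner_smul_left a θ c⟩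
  have hsub : msupport μ ⊆ {x : En n | ⟪x, θ⟫ ≤ 0} := fun x hx => hc x hx
  have hH : convexHull ℝ (msupport μ) ⊆ {x : En n | ⟪x, θ⟫ ≤ 0} :=
    convexHull_min hsub (convex_halfSpace_le hlin 0)
  have h0' : (0 : En n) ∈ interior {x : En n | ⟪x, θ⟫ ≤ 0} :=
    interior_mono hH h0
  obtain ⟨ε, hε, hball⟩ := Metric.mem_nhds_iff.mp (mem_interior_iff_mem_nhds.mp h0')
  have hy : (ε / 2) • θ ∈ Metric.ball (0 : En n) ε := by
    simp [mem_ball_iff_norm, norm_smul, hθ, abs_of_pos hε]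
    linarith
  have := hball hy
  simp only [Set.mem_setOf_eq, real_inner_smul_left, real_inner_self_eq_norm_sq, hθ] at this
  nlinarith

lemma aux_g_pos {n : ℕ} (μ : Measure (En n)) [IsProbabilityMeasure μ]
    (hmom : Integrable (fun x : En n => ‖x‖) μ)
    (h0 : (0 : En n) ∈ interior (convexHull ℝ (msupport μ)))
    (θ : En n) (hθ : ‖θ‖ = 1) : ∃ m : ℕ, 0 < gfun μ (1 / (m + 1)) θ := by
  obtain ⟨x₀, hx₀, ht⟩ := aux_exists_pos μ h0 θ hθ
  set t : ℝ := ⟪x₀, θ⟫ with htdef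
  obtain ⟨m, hm⟩ := exists_nat_gt (2 / t)
  refine ⟨m, ?_⟩
  have hmt : 1 / ((m : ℝ) + 1) < t / 2 := by
    rw [div_lt_div_iff₀ (by positivity) (by norm_num)]
    have h2t : 2 / t < (m : ℝ) + 1 := by linarith
    rw [div_lt_iff₀ ht] at h2t
    linarith
  set B : Set (En n) := Metric.ball x₀ (t / 4) with hBdef
  have hμB : 0 < μ B := hx₀ B Metric.isOpen_ball (Metric.mem_ball_self (by linarith))
  have hpt : ∀ x : En n, Set.indicator B (fun _ => t / 4) x ≤ max (⟪x, θ⟫ - 1 / (m + 1)) 0 := by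
    intro x
    by_cases hx : x ∈ B
    · rw [Set.indicator_of_mem hx]
      have h1 : |⟪x - x₀, θ⟫| ≤ ‖x - x₀‖ * ‖θ‖ := abs_real_inner_le_norm _ _
      have h2 : ‖x - x₀‖ < t / 4 := by
        simpa [dist_eq_norm] using Metric.mem_ball.mp hx
      have h3 : ⟪x, θ⟫ = t + ⟪x - x₀, θ⟫ := by
        rw [htdef, ← inner_add_left]
        congr 1
        abel
      have h4 : -(t/4) ≤ ⟪x - x₀, θ⟫ := by
        rw [hθ, mul_one] at h1
        linarith [ (abs_le.mp (h1.trans h2.le)).1 ]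
      refine le_max_of_le_left ?_
      rw [h3]
      linarith
    · rw [Set.indicator_of_notMem hx]
      exact le_max_right _ _
  have hint : Integrable (Set.indicator B (fun _ : En n => t / 4)) μ :=
    (integrable_const (t / 4)).indicator measurableSet_ball
  have h5 : (t / 4) * (μ B).toReal ≤ gfun μ (1 / (m + 1)) θ := by
    have := integral_mono hint (aux_int_g μ hmom (1 / (m + 1)) θ) hpt
    rwa [integral_indicator measurableSet_ball, setIntegral_const, smul_eq_mul,
      mul_comm] at this
  have h6 : 0 < (μ B).toReal := ENNReal.toReal_pos hμB.ne' (measure_ne_top μ B)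
  calc (0:ℝ) < (t / 4) * (μ B).toReal := by positivity
    _ ≤ _ := h5

theorem statement5 {n : ℕ} (μ : Measure (En n)) [IsProbabilityMeasure μ]
    (hmom : Integrable (fun x : En n => ‖x‖) μ)
    (h0 : (0 : En n) ∈ interior (convexHull ℝ (msupport μ))) :
    ∃ c₁ > (0 : ℝ), ∃ c₂ > (0 : ℝ), ∀ θ : En n, ‖θ‖ = 1 →
      c₂ ≤ ∫ x, Set.indicator {x : En n | c₁ < ⟪x, θ⟫} (fun x => ⟪x, θ⟫) x ∂μ := by
  by_cases hne : ∃ θ : En n, ‖θ‖ = 1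
  swap
  · exact ⟨1, one_pos, 1, one_pos, fun θ hθ => absurd ⟨θ, hθ⟩ hne⟩
  set S : Set (En n) := Metric.sphere 0 1 with hSdef
  have hSc : IsCompact S := isCompact_sphere 0 1
  have hmemS : ∀ θ : En n, θ ∈ S ↔ ‖θ‖ = 1 := by
    intro θ; simp [hSdef, mem_sphere_iff_norm]
  -- open cover
  have hcover : S ⊆ ⋃ m : ℕ, (gfun μ (1 / (m + 1))) ⁻¹' Set.Ioi 0 := by
    intro θ hθ
    obtain ⟨m, hm⟩ := aux_g_pos μ hmom h0 θ ((hmemS θ).mp hθ)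
    exact Set.mem_iUnion.mpr ⟨m, hm⟩
  obtain ⟨F, hF⟩ := hSc.elim_finite_subcover _
    (fun m => (isOpen_Ioi).preimage (aux_g_cont μ hmom _)) hcover
  set N : ℕ := F.sup id with hN
  -- positivity on the sphere for index N
  have hpos : ∀ θ ∈ S, 0 < gfun μ (1 / (N + 1)) θ := by
    intro θ hθ
    obtain ⟨m, hmF, hm⟩ := Set.mem_iUnion₂.mp (hF hθ)
    have hmN : (m : ℝ) ≤ N := by
      exact_mod_cast Finset.le_sup (f := id) hmF
    have hle : (1 : ℝ) / (N + 1) ≤ 1 / (m + 1) := by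
      apply one_div_le_one_div_of_le <;> linarith
    calc (0:ℝ) < gfun μ (1 / (m + 1)) θ := hm
      _ ≤ gfun μ (1 / (N + 1)) θ := aux_g_anti μ hmom _ _ hle θ
  -- minimum over the sphere
  obtain ⟨θ₁, hθ₁⟩ := hne
  have hSne : S.Nonempty := ⟨θ₁, (hmemS θ₁).mpr hθ₁⟩
  obtain ⟨θ₀, hθ₀S, hmin⟩ := hSc.exists_isMinOn hSne (aux_g_cont μ hmom (1 / (N + 1))).continuousOn
  refine ⟨1 / (N + 1), by positivity, gfun μ (1 / (N + 1)) θ₀, hpos θ₀ hθ₀S, fun θ hθ => ?_⟩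
  have h1 : gfun μ (1 / (N + 1)) θ₀ ≤ gfun μ (1 / (N + 1)) θ := hmin ((hmemS θ).mpr hθ)
  refine h1.trans ?_
  -- pointwise comparison
  refine integral_mono (aux_int_g μ hmom _ θ)
    ((aux_int_inner μ hmom θ).indicator ?_) fun x => ?_
  · exact (isOpen_lt continuous_const (Continuous.inner continuous_id continuous_const)).measurableSet
  · by_cases hx : (1:ℝ) / (N + 1) < ⟪x, θ⟫
    · rw [Set.indicator_apply, if_pos (show x ∈ {x : En n | (1:ℝ)/(N+1) < ⟪x, θ⟫} from hx)]
      have hc : (0:ℝ) < 1 / (N + 1) := by positivity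
      refine max_le (by linarith) (by linarith)
    · rw [Set.indicator_apply, if_neg (show x ∉ {x : En n | (1:ℝ)/(N+1) < ⟪x, θ⟫} from hx)]
      push_neg at hx
      exact max_le (by linarith) le_rfl
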